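/- Every finite strategic game G = (N, X, π) with the lexicographical improvement property (LIP) possesses a strong Nash equilibrium. -/

import Mathlib

open Finset

/-- The vector `a` sorted in non-increasing order. -/
noncomputable def sortDesc {α : Type*} [LinearOrder α] {q : ℕ} (a : Fin q → α) : Fin q → α :=
  fun i => a (Tuple.sort a i.rev)

/-- `a` is strictly sorted-lexicographically smaller than `b`. -/
def SLexLt {α : Type*} [LinearOrder α] {q : ℕ} (a b : Fin q → α) : Prop :=
  ∃ m : Fin q, (∀ i, i < m → sortDesc a i = sortDesc b i) ∧ sortDesc a m < sortDesc b m

/-- Sorted-lexicographic comparison of vectors indexed by an arbitrary finite type. -/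
def SLexLtOn {α : Type*} [LinearOrder α] {ι : Type*} [Fintype ι] (a b : ι → α) : Prop :=
  SLexLt (a ∘ (Fintype.equivFin ι).symm) (b ∘ (Fintype.equivFin ι).symm)

/-- An improving move: some nonempty coalition `S` deviates (players outside `S`
keep their strategies) and every member of `S` strictly decreases her cost. -/
def ImprovingMove {ι : Type*} {X : ι → Type*} {β : Type*} [Preorder β]
    (π : (∀ i, X i) → ι → β) (x y : ∀ i, X i) : Prop :=
  ∃ S : Finset ι, S.Nonempty ∧ (∀ i ∉ S, y i = x i) ∧ ∀ i ∈ S, π y i < π x i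

lemma slexLt_iff_lex {q : ℕ} (a b : Fin q → ℝ) :
    SLexLt a b ↔ toLex (sortDesc a) < toLex (sortDesc b) := by
  constructor
  · rintro ⟨m, h1, h2⟩
    exact ⟨m, fun j hj => h1 j hj, h2⟩
  · rintro ⟨m, h1, h2⟩
    exact ⟨m, fun j hj => h1 j hj, h2⟩

/-- Every finite strategic game with the LIP possesses a
strong Nash equilibrium. -/
theorem stmt_3 {ι : Type*} [Fintype ι] [Nonempty ι] {X : ι → Type*}
    [∀ i, Fintype (X i)] [∀ i, Nonempty (X i)]
    (π : (∀ i, X i) → ι → ℝ) (hπ : ∀ x i, 0 ≤ π x i)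
    (hlip : ∃ (q : ℕ) (φ : (∀ i, X i) → Fin q → ℝ), (∀ x j, 0 ≤ φ x j) ∧
        ∀ x y, ImprovingMove π x y → SLexLt (φ y) (φ x)) :
    ∃ x : ∀ i, X i, ∀ y, ¬ ImprovingMove π x y := by
  classical
  obtain ⟨q, φ, _, hdec⟩ := hlip
  obtain ⟨p, hpmem, hp⟩ := Finset.exists_minimal (s :=
    Finset.univ.image (fun x : ∀ i, X i => (toLex (sortDesc (φ x)) : Lex (Fin q → ℝ))))
    ⟨_, Finset.mem_image_of_mem _ (Finset.mem_univ (Classical.arbitrary _))⟩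
  obtain ⟨x, -, rfl⟩ := Finset.mem_image.mp hpmem
  refine ⟨x, fun y hy => ?_⟩
  have := (slexLt_iff_lex (φ y) (φ x)).mp (hdec x y hy)
  exact this.not_ge (hp (Finset.mem_image_of_mem _ (Finset.mem_univ y)) this.le)
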